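/- arXiv:2402.05530 — 2 statements merged into one kernel-verified Lean document; each statement's English description precedes it below -/
import Mathlib

section
/- Let a = (a_1,…,a_r) be a sequence of positive integers, r ≥ 1, and let D be a common multiple of a_1,…,a_r. Then for every nonnegative integer n, p_a(n) = (1/(r−1)!) · Σ_{m=0}^{r−1} Σ_{(j_1,…,j_r)} Σ_{k=m}^{r−1} c(r, k+1) · (−1)^{k−m} · binom(k, m) · D^{−k} · (a_1 j_1 + ⋯ + a_r j_r)^{k−m} · n^m, where the sum over (j_1,…,j_r) ranges over all tuples with 0 ≤ j_i ≤ D/a_i − 1 for 1 ≤ i ≤ r and a_1 j_1 + ⋯ + a_r j_r ≡ n (mod D). -/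
open Finset

/-- The plane partition diamond condition of length `k` on `a : Fin (3k+1) → ℕ`,
where `a i` (0-indexed) corresponds to `a_{i+1}` (1-indexed). -/
def IsDiamond (k : ℕ) (a : Fin (3 * k + 1) → ℕ) : Prop :=
  ∀ i : ℕ, ∀ _ : i < k,
    a ⟨3 * i + 1, by omega⟩ ≤ a ⟨3 * i, by omega⟩ ∧
    a ⟨3 * i + 2, by omega⟩ ≤ a ⟨3 * i, by omega⟩ ∧
    a ⟨3 * i + 3, by omega⟩ ≤ a ⟨3 * i + 1, by omega⟩ ∧
    a ⟨3 * i + 3, by omega⟩ ≤ a ⟨3 * i + 2, by omega⟩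

/-- `ppD k n`: the number of plane partition diamonds of length `k` of `n`. -/
noncomputable def ppD (k n : ℕ) : ℕ :=
  Nat.card {a : Fin (3 * k + 1) → ℕ // IsDiamond k a ∧ ∑ i, a i = n}

/-- The restricted partition function `p_a(n)` for a sequence `a = (a_1, …, a_r)`. -/
noncomputable def rp {r : ℕ} (a : Fin r → ℕ) (n : ℕ) : ℕ :=
  Nat.card {x : Fin r → ℕ // ∑ i, a i * x i = n}

/-- The sequence `a[k]`, 0-indexed: `seqA k i = a[k]_{i+1}`. -/
def seqA (k : ℕ) : Fin (3 * k + 1) → ℕ := fun i =>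
  if ((i : ℕ) + 1) % 6 = 4 then ((i : ℕ) + 1) / 2 else (i : ℕ) + 1

/-- `α_k = ⌊(k+1)/2⌋`. -/
def alphaK (k : ℕ) : ℕ := (k + 1) / 2

/-- `m_J = ∑_{i ∈ J} (3i − 1)`. -/
def mJ (J : Finset ℕ) : ℕ := ∑ i ∈ J, (3 * i - 1)

/-- `A_k = {1 ≤ j ≤ 3k+1 : j ≢ 4 (mod 6)}`. -/
def setA (k : ℕ) : Finset ℕ := (Finset.Icc 1 (3 * k + 1)).filter (fun j => j % 6 ≠ 4)

/-- `D[k] = lcm A_k`. -/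
def DK (k : ℕ) : ℕ := (setA k).lcm id

/-- `β_k = 5α_k − 2` if `k` is odd, `β_k = 5α_k + 1` if `k` is even. -/
def betaK (k : ℕ) : ℕ := if k % 2 = 1 then 5 * alphaK k - 2 else 5 * alphaK k + 1

/-- `φ_k(j) = j + ⌈(j−3)/5⌉` (the value is a nonnegative integer for `j ≥ 1`). -/
def phiK (j : ℕ) : ℕ := ((j : ℤ) + ⌈((j : ℚ) - 3) / 5⌉).toNat

/-- `ψ_k(j) = j − ⌈(j−3)/6⌉` (the value is a nonnegative integer for `j ≥ 1`). -/
def psiK (j : ℕ) : ℕ := ((j : ℤ) - ⌈((j : ℚ) - 3) / 6⌉).toNat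

/-- `B'_k = {j ∈ B_k : j ≡ 2 or 4 (mod 5), j ≤ φ_k⁻¹(3α_k − 1)}`. -/
def setB' (k : ℕ) : Finset ℕ :=
  (Finset.Icc 1 (betaK k)).filter
    (fun j => (j % 5 = 2 ∨ j % 5 = 4) ∧ j ≤ psiK (3 * alphaK k - 1))

/-- `ε_k(j) = 2` if `j ∈ B'_k`, else `1`. -/
def epsK (k j : ℕ) : ℕ := if j ∈ setB' k then 2 else 1

/-- `s_k(t_1, …, t_{β_k}) = ∏_{j ∈ B'_k} (1 + min{t_j, 2(D[k]/φ_k(j) − 1) − t_j})`. -/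
def sK (k : ℕ) (t : ℕ → ℕ) : ℕ :=
  ∏ j ∈ setB' k, (1 + min (t j) (2 * (DK k / phiK j - 1) - t j))

/-- Turn a `Fin β`-indexed tuple into a 1-indexed family: `tOf t j = t_j` for `1 ≤ j ≤ β`. -/
def tOf {β : ℕ} (t : Fin β → ℕ) : ℕ → ℕ := fun j =>
  if h : 1 ≤ j ∧ j ≤ β then t ⟨j - 1, by omega⟩ else 0

/-- Unsigned Stirling numbers of the first kind: `x(x+1)⋯(x+r−1) = ∑_k stirling1 r k * x^k`. -/
def stirling1 : ℕ → ℕ → ℕ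
  | 0, 0 => 1
  | 0, _ + 1 => 0
  | _ + 1, 0 => 0
  | n + 1, m + 1 => stirling1 n m + n * stirling1 n (m + 1)

lemma stirling1_eq_zero : ∀ {n m : ℕ}, n < m → stirling1 n m = 0
  | 0, _ + 1, _ => rfl
  | n + 1, m + 1, h => by
    show stirling1 n m + n * stirling1 n (m + 1) = 0
    rw [stirling1_eq_zero (by omega), stirling1_eq_zero (by omega), Nat.mul_zero]

lemma prod_stirling (r : ℕ) (x : ℚ) :
    ∏ j ∈ Finset.range r, (x + j + 1)
      = ∑ l ∈ Finset.range (r + 1), (stirling1 (r + 1) (l + 1) : ℚ) * x ^ l := by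
  induction r with
  | zero => simp [stirling1]
  | succ r ih =>
    rw [Finset.prod_range_succ, ih]
    have hrec : ∀ l : ℕ, (stirling1 (r + 2) (l + 1) : ℚ)
        = (stirling1 (r + 1) l : ℚ) + (r + 1) * (stirling1 (r + 1) (l + 1) : ℚ) := by
      intro l
      show ((stirling1 (r + 1) l + (r + 1) * stirling1 (r + 1) (l + 1) : ℕ) : ℚ) = _
      push_cast; ring
    have h1 : ∑ l ∈ Finset.range (r + 2), (stirling1 (r + 2) (l + 1) : ℚ) * x ^ l
        = ∑ l ∈ Finset.range (r + 2), ((stirling1 (r + 1) l : ℚ) * x ^ l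
          + (r + 1) * (stirling1 (r + 1) (l + 1) : ℚ) * x ^ l) := by
      refine Finset.sum_congr rfl fun l _ => ?_
      rw [hrec]; ring
    rw [h1, Finset.sum_add_distrib]
    have h2 : ∑ l ∈ Finset.range (r + 2), (stirling1 (r + 1) l : ℚ) * x ^ l
        = ∑ l ∈ Finset.range (r + 1), (stirling1 (r + 1) (l + 1) : ℚ) * x ^ (l + 1) := by
      rw [Finset.sum_range_succ']
      simp [show stirling1 (r + 1) 0 = 0 from rfl]
    have h3 : ∑ l ∈ Finset.range (r + 2), (r + 1 : ℚ) * (stirling1 (r + 1) (l + 1) : ℚ) * x ^ l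
        = ∑ l ∈ Finset.range (r + 1), (r + 1 : ℚ) * (stirling1 (r + 1) (l + 1) : ℚ) * x ^ l := by
      rw [Finset.sum_range_succ, stirling1_eq_zero (show r + 1 < r + 2 by omega)]
      simp
    rw [h2, h3, ← Finset.sum_add_distrib, Finset.sum_mul]
    refine Finset.sum_congr rfl fun l _ => ?_
    ring


lemma card_sum_eq (R q : ℕ) (hR : 0 < R) :
    ((Fintype.piFinset fun _ : Fin R => Finset.range (q + 1)).filter
      fun y => ∑ i, y i = q).card = (q + R - 1).choose (R - 1) := by
  classical
  set Y := (Fintype.piFinset fun _ : Fin R => Finset.range (q + 1)).filter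
      (fun y => ∑ i, y i = q) with hY
  have e : {y // y ∈ Y} ≃ {P : Fin R → ℕ // ∑ i, P i = q} :=
    { toFun := fun y => ⟨y.1, (Finset.mem_filter.mp y.2).2⟩
      invFun := fun P => ⟨P.1, by
        rw [hY, Finset.mem_filter, Fintype.mem_piFinset]
        refine ⟨fun i => Finset.mem_range.mpr ?_, P.2⟩
        have : P.1 i ≤ ∑ j, P.1 j :=
          Finset.single_le_sum (fun j _ => Nat.zero_le _) (Finset.mem_univ i)
        omega⟩
      left_inv := fun y => rfl
      right_inv := fun P => rfl }
  rw [← Nat.card_eq_finsetCard, Nat.card_congr e,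
    Nat.card_congr (Sym.equivNatSumOfFintype (Fin R) q).symm,
    Nat.card_eq_fintype_card, Sym.card_sym_eq_choose, Fintype.card_fin]
  have h1 : R + q - 1 = q + R - 1 := by omega
  have h2 : q + R - 1 - q = R - 1 := by omega
  rw [h1, ← h2, Nat.choose_symm (by omega)]

lemma count_lemma (r : ℕ) (a : Fin (r + 1) → ℕ) (ha : ∀ i, 0 < a i)
    (D : ℕ) (hD0 : 0 < D) (hD : ∀ i, a i ∣ D) (n : ℕ) :
    rp a n = ∑ t ∈ (Fintype.piFinset fun i => Finset.range (D / a i)).filter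
        (fun t => (∑ i, a i * t i) % D = n % D),
      (if (∑ i, a i * t i) ≤ n then ((n - ∑ i, a i * t i) / D + r).choose r else 0) := by
  classical
  set T := (Fintype.piFinset fun i => Finset.range (D / a i)).filter
      (fun t => (∑ i, a i * t i) % D = n % D) with hT
  set X := (Fintype.piFinset fun _ : Fin (r + 1) => Finset.range (n + 1)).filter
      (fun x => ∑ i, a i * x i = n) with hX
  have hd : ∀ i, 0 < D / a i := fun i => Nat.div_pos (Nat.le_of_dvd hD0 (hD i)) (ha i)
  have had : ∀ i, a i * (D / a i) = D := fun i => Nat.mul_div_cancel' (hD i)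
  -- decomposition identity
  have key : ∀ x : Fin (r + 1) → ℕ,
      ∑ i, a i * x i = (∑ i, a i * (x i % (D / a i))) + D * ∑ i, x i / (D / a i) := by
    intro x
    rw [Finset.mul_sum, ← Finset.sum_add_distrib]
    refine Finset.sum_congr rfl fun i _ => ?_
    conv_lhs => rw [← Nat.mod_add_div (x i) (D / a i)]
    rw [Nat.mul_add, ← Nat.mul_assoc, had i]
  -- bound on x i for members of X
  have hxb : ∀ x : Fin (r + 1) → ℕ, (∑ i, a i * x i = n) → ∀ i, x i < n + 1 := by
    intro x hx i
    have h1 : a i * x i ≤ ∑ j, a j * x j :=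
      Finset.single_le_sum (f := fun j => a j * x j) (fun j _ => Nat.zero_le _)
        (Finset.mem_univ i)
    have h2 : x i ≤ a i * x i := Nat.le_mul_of_pos_left _ (ha i)
    omega
  -- Step 1 : rp = X.card
  have step1 : rp a n = X.card := by
    rw [← Nat.card_eq_finsetCard]
    refine Nat.card_congr ?_
    exact
      { toFun := fun x => ⟨x.1, by
          rw [hX, Finset.mem_filter, Fintype.mem_piFinset]
          exact ⟨fun i => Finset.mem_range.mpr (hxb x.1 x.2 i), x.2⟩⟩
        invFun := fun x => ⟨x.1, (Finset.mem_filter.mp x.2).2⟩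
        left_inv := fun x => rfl
        right_inv := fun x => rfl }
  -- Step 2 : fiberwise count
  have hg : ∀ x ∈ X, (fun i => x i % (D / a i)) ∈ T := by
    intro x hx
    obtain ⟨-, hx2⟩ := Finset.mem_filter.mp hx
    rw [hT, Finset.mem_filter, Fintype.mem_piFinset]
    constructor
    · exact fun i => Finset.mem_range.mpr (Nat.mod_lt _ (hd i))
    · have := key x
      rw [hx2] at this
      rw [← Nat.add_mul_mod_self_left (∑ i, a i * (x i % (D / a i))) D
        (∑ i, x i / (D / a i)), ← this]
  rw [step1, Finset.card_eq_sum_card_fiberwise hg]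
  refine Finset.sum_congr rfl fun t ht => ?_
  obtain ⟨ht1, ht2⟩ := Finset.mem_filter.mp ht
  rw [Fintype.mem_piFinset] at ht1
  have htd : ∀ i, t i < D / a i := fun i => Finset.mem_range.mp (ht1 i)
  by_cases hsn : (∑ i, a i * t i) ≤ n
  · rw [if_pos hsn]
    have hdvd : D ∣ n - ∑ i, a i * t i :=
      (Nat.modEq_iff_dvd' hsn).mp ht2
    obtain ⟨q, hqD⟩ := hdvd
    have hq : (n - ∑ i, a i * t i) / D = q := by
      rw [hqD]; exact Nat.mul_div_cancel_left _ hD0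
    rw [hq]
    have hcs : ((Fintype.piFinset fun _ : Fin (r + 1) => Finset.range (q + 1)).filter
        (fun y => ∑ i, y i = q)).card = (q + r).choose r := by
      have e1 : q + (r + 1) - 1 = q + r := by omega
      have e2 : r + 1 - 1 = r := by omega
      have h := card_sum_eq (r + 1) q (by omega)
      rw [e1, e2] at h
      exact h
    rw [← hcs]
    clear hcs
    refine Finset.card_bij' (fun x (_ : x ∈ Finset.filter (fun x => (fun i => x i % (D / a i)) = t) X) i => x i / (D / a i))
      (fun y (_ : y ∈ Finset.filter (fun y => ∑ i, y i = q) (Fintype.piFinset fun _ : Fin (r+1) => Finset.range (q+1))) i => t i + (D / a i) * y i) ?_ ?_ ?_ ?_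
    · -- maps into Y
      intro x hx
      obtain ⟨hx1, hx2⟩ := Finset.mem_filter.mp hx
      obtain ⟨hx3, hx4⟩ := Finset.mem_filter.mp hx1
      have hxt : ∀ i, x i % (D / a i) = t i := fun i => congrFun hx2 i
      have hkey := key x
      rw [hx4] at hkey
      simp only [hxt] at hkey
      have h7 : (∑ i, a i * t i) + D * q = n := by
        rw [← hqD]; exact Nat.add_sub_cancel' hsn
      have h8 : D * (∑ i, x i / (D / a i)) = D * q := by omega
      have hsum : ∑ i, x i / (D / a i) = q := Nat.eq_of_mul_eq_mul_left hD0 h8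
      rw [Finset.mem_filter, Fintype.mem_piFinset]
      refine ⟨fun i => Finset.mem_range.mpr ?_, hsum⟩
      have : x i / (D / a i) ≤ ∑ j, x j / (D / a j) :=
        Finset.single_le_sum (f := fun j => x j / (D / a j)) (fun j _ => Nat.zero_le _)
          (Finset.mem_univ i)
      exact Nat.lt_succ_of_le (le_of_le_of_eq this hsum)
    · -- maps back into fiber
      intro y hy
      obtain ⟨hy1, hy2⟩ := Finset.mem_filter.mp hy
      have hsum : ∑ i, a i * (t i + (D / a i) * y i) = n := by
        have : ∀ i, a i * (t i + (D / a i) * y i) = a i * t i + D * y i := by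
          intro i; rw [Nat.mul_add, ← Nat.mul_assoc, had i]
        rw [Finset.sum_congr rfl (fun i _ => this i), Finset.sum_add_distrib,
          ← Finset.mul_sum, hy2, ← hqD]
        exact Nat.add_sub_cancel' hsn
      rw [Finset.mem_filter, hX, Finset.mem_filter, Fintype.mem_piFinset]
      refine ⟨⟨fun i => Finset.mem_range.mpr (hxb _ hsum i), hsum⟩, ?_⟩
      funext i
      rw [Nat.add_mul_mod_self_left, Nat.mod_eq_of_lt (htd i)]
    · -- left inverse
      intro x hx
      obtain ⟨-, hx2⟩ := Finset.mem_filter.mp hx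
      funext i
      show t i + D / a i * (x i / (D / a i)) = x i
      have hxt : x i % (D / a i) = t i := congrFun hx2 i
      rw [← hxt, Nat.mod_add_div]
    · -- right inverse
      intro y hy
      funext i
      show (t i + D / a i * y i) / (D / a i) = y i
      rw [Nat.add_mul_div_left _ _ (hd i), Nat.div_eq_of_lt (htd i), Nat.zero_add]
  · rw [if_neg hsn]
    rw [Finset.card_eq_zero, Finset.eq_empty_iff_forall_notMem]
    intro x hx
    obtain ⟨hx1, hx2⟩ := Finset.mem_filter.mp hx
    obtain ⟨-, hx4⟩ := Finset.mem_filter.mp hx1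
    apply hsn
    rw [← hx4]
    refine Finset.sum_le_sum fun i _ => Nat.mul_le_mul_left _ ?_
    rw [← hx2]
    exact Nat.mod_le _ _


lemma prod_range_asc (q p : ℕ) :
    ∏ j ∈ Finset.range p, (q + 1 + j) = (q + 1).ascFactorial p := by
  induction p with
  | zero => simp
  | succ p ih => rw [Finset.prod_range_succ, ih, Nat.ascFactorial_succ, Nat.mul_comm]

/-- the explicit quasi-polynomial formula for the restricted partition
function `p_a(n)` in terms of unsigned Stirling numbers of the first kind. -/
theorem stmt12 (r : ℕ) (hr : 1 ≤ r) (a : Fin r → ℕ) (ha : ∀ i, 0 < a i)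
    (D : ℕ) (hD0 : 0 < D) (hD : ∀ i, a i ∣ D) (n : ℕ) :
    (rp a n : ℚ) = (1 / (Nat.factorial (r - 1) : ℚ)) *
      ∑ m ∈ Finset.range r,
      ∑ t ∈ (Fintype.piFinset fun i => Finset.range (D / a i)).filter
          (fun t => (∑ i, a i * t i) % D = n % D),
      ∑ l ∈ Finset.Icc m (r - 1),
        (stirling1 r (l + 1) : ℚ) * (-1 : ℚ) ^ (l - m) * (l.choose m : ℚ) *
          (D : ℚ) ^ (-(l : ℤ)) * ((∑ i, a i * t i : ℕ) : ℚ) ^ (l - m) * (n : ℚ) ^ m := by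
  classical
  obtain ⟨p, rfl⟩ : ∃ p, r = p + 1 := ⟨r - 1, by omega⟩
  simp only [Nat.add_sub_cancel]
  rw [count_lemma p a ha D hD0 hD n, Nat.cast_sum, Finset.sum_comm, Finset.mul_sum]
  refine Finset.sum_congr rfl fun t ht => ?_
  obtain ⟨ht1, ht2⟩ := Finset.mem_filter.mp ht
  rw [Fintype.mem_piFinset] at ht1
  have htd : ∀ i, t i < D / a i := fun i => Finset.mem_range.mp (ht1 i)
  have hDQ : (D : ℚ) ≠ 0 := Nat.cast_ne_zero.mpr (by omega)
  set S : ℕ := ∑ i, a i * t i with hS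
  set x : ℚ := ((n : ℚ) - (S : ℚ)) / D with hx
  -- rewrite the inner double sum as the stirling product
  have hzp : ∀ l : ℕ, (D : ℚ) ^ (-(l : ℤ)) = ((D : ℚ) ^ l)⁻¹ := fun l => by
    rw [zpow_neg, zpow_natCast]
  have swap : ∀ F : ℕ → ℕ → ℚ,
      ∑ m ∈ Finset.range (p + 1), ∑ l ∈ Finset.Icc m p, F m l
        = ∑ l ∈ Finset.range (p + 1), ∑ m ∈ Finset.range (l + 1), F m l := by
    intro F
    rw [Finset.sum_sigma' (Finset.range (p + 1)) (fun m => Finset.Icc m p)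
        (fun m l => F m l),
      Finset.sum_sigma' (Finset.range (p + 1)) (fun l => Finset.range (l + 1))
        (fun l m => F m l)]
    refine Finset.sum_nbij' (fun y : (_ : ℕ) × ℕ => (⟨y.2, y.1⟩ : (_ : ℕ) × ℕ))
      (fun y : (_ : ℕ) × ℕ => (⟨y.2, y.1⟩ : (_ : ℕ) × ℕ)) ?_ ?_ ?_ ?_ ?_ <;>
      simp only [Finset.mem_sigma, Finset.mem_range, Finset.mem_Icc, Sigma.forall, and_imp] <;>
      intros <;> first | omega | rfl | trivial
  have key : ∑ m ∈ Finset.range (p + 1), ∑ l ∈ Finset.Icc m p,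
      (stirling1 (p + 1) (l + 1) : ℚ) * (-1 : ℚ) ^ (l - m) * (l.choose m : ℚ) *
        (D : ℚ) ^ (-(l : ℤ)) * (S : ℚ) ^ (l - m) * (n : ℚ) ^ m
      = ∏ j ∈ Finset.range p, (x + j + 1) := by
    rw [swap]
    have step : ∀ l ∈ Finset.range (p + 1),
        ∑ m ∈ Finset.range (l + 1),
          (stirling1 (p + 1) (l + 1) : ℚ) * (-1 : ℚ) ^ (l - m) * (l.choose m : ℚ) *
            (D : ℚ) ^ (-(l : ℤ)) * (S : ℚ) ^ (l - m) * (n : ℚ) ^ m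
        = (stirling1 (p + 1) (l + 1) : ℚ) * x ^ l := by
      intro l _
      have hb : ((n : ℚ) - (S : ℚ)) ^ l
          = ∑ m ∈ Finset.range (l + 1),
            (n : ℚ) ^ m * (-(S : ℚ)) ^ (l - m) * (l.choose m : ℚ) := by
        rw [sub_eq_add_neg, add_pow]
      have hxl : x ^ l = ((D : ℚ) ^ l)⁻¹ * ((n : ℚ) - (S : ℚ)) ^ l := by
        rw [hx, div_pow, div_eq_inv_mul]
      rw [hxl, hb, Finset.mul_sum, Finset.mul_sum]
      refine Finset.sum_congr rfl fun m _ => ?_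
      rw [hzp, neg_pow]
      ring
    rw [Finset.sum_congr rfl step, ← prod_stirling p x]
  rw [key]
  -- now case on S ≤ n
  have hub : S < (p + 1) * D := by
    have h1 : ∀ i, a i * t i ≤ D - 1 := by
      intro i
      have h2 : a i * (t i + 1) ≤ a i * (D / a i) := Nat.mul_le_mul_left _ (htd i)
      rw [Nat.mul_div_cancel' (hD i)] at h2
      rw [Nat.mul_add, Nat.mul_one] at h2
      have := ha i
      omega
    have h3 : S ≤ ∑ _i : Fin (p + 1), (D - 1) :=
      Finset.sum_le_sum fun i _ => h1 i
    rw [Finset.sum_const, Finset.card_univ, Fintype.card_fin, smul_eq_mul] at h3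
    have h4 : (p + 1) * (D - 1) + (p + 1) = (p + 1) * D := by
      rw [← Nat.mul_succ]
      congr 1
      omega
    omega
  by_cases hsn : S ≤ n
  · rw [if_pos hsn]
    have hdvd : D ∣ n - S := (Nat.modEq_iff_dvd' hsn).mp ht2
    obtain ⟨q, hqD⟩ := hdvd
    have hq : (n - S) / D = q := by rw [hqD]; exact Nat.mul_div_cancel_left _ hD0
    have hxq : x = (q : ℚ) := by
      rw [hx]
      have h4 : (n : ℚ) - (S : ℚ) = ((n - S : ℕ) : ℚ) := by
        rw [Nat.cast_sub hsn]
      rw [h4, hqD]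
      push_cast
      rw [mul_comm, mul_div_assoc, div_self hDQ, mul_one]
    have hprod : ∏ j ∈ Finset.range p, (x + j + 1)
        = ((Nat.factorial p * (q + p).choose p : ℕ) : ℚ) := by
      have h5 : ∏ j ∈ Finset.range p, (x + j + 1)
          = ((∏ j ∈ Finset.range p, (q + 1 + j) : ℕ) : ℚ) := by
        rw [Nat.cast_prod]
        refine Finset.prod_congr rfl fun j _ => ?_
        rw [hxq]; push_cast; ring
      rw [h5, prod_range_asc q p, Nat.ascFactorial_eq_factorial_mul_choose]
    rw [hq, hprod]
    have hfac : (Nat.factorial p : ℚ) ≠ 0 := Nat.cast_ne_zero.mpr (Nat.factorial_ne_zero p)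
    push_cast
    field_simp
  · rw [if_neg hsn]
    push_neg at hsn
    have hdvd : D ∣ S - n := (Nat.modEq_iff_dvd' (le_of_lt hsn)).mp ht2.symm
    obtain ⟨k, hkD⟩ := hdvd
    have hk1 : 1 ≤ k := by
      rcases Nat.eq_zero_or_pos k with h | h
      · rw [h, Nat.mul_zero] at hkD; omega
      · exact h
    have hk2 : k ≤ p := by
      by_contra h
      push_neg at h
      have h10 : D * (p + 1) ≤ D * k := Nat.mul_le_mul_left D (by omega)
      have h11 : D * (p + 1) = (p + 1) * D := Nat.mul_comm _ _
      omega
    have hx0 : x + ((k - 1 : ℕ) : ℚ) + 1 = 0 := by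
      have h7 : (S : ℚ) - (n : ℚ) = ((S - n : ℕ) : ℚ) := by
        rw [Nat.cast_sub (le_of_lt hsn)]
      have h8 : (n : ℚ) - (S : ℚ) = -((D : ℚ) * k) := by
        rw [← neg_sub, h7, hkD]; push_cast; ring
      have h9 : ((k - 1 : ℕ) : ℚ) = (k : ℚ) - 1 := by
        rw [Nat.cast_sub hk1]; norm_num
      rw [hx, h8, h9, neg_div, mul_comm, mul_div_assoc, div_self hDQ, mul_one]
      ring
    rw [Finset.prod_eq_zero (Finset.mem_range.mpr (show k - 1 < p by omega)) hx0]
    simp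
end

section
/- Let a = (a_1,…,a_r) be a sequence of positive integers, r ≥ 1, and let D be a common multiple of a_1,…,a_r. Then for every integer n, (1/(D·(r−1)!)) · Σ_{0 ≤ j_1 ≤ D/a_1 − 1, …, 0 ≤ j_r ≤ D/a_r − 1} ∏_{ℓ=1}^{r−1} ( (n − a_1 j_1 − ⋯ − a_r j_r)/D + ℓ ) = (1/(a_1⋯a_r)) · Σ_{u=0}^{r−1} ((−1)^u/(r−1−u)!) · Σ_{i_1+⋯+i_r=u} (B_{i_1}⋯B_{i_r}/(i_1!⋯i_r!)) · a_1^{i_1}⋯a_r^{i_r} · n^{r−1−u} (both sides being the polynomial part of p_a(n)). -/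
open Finset

section AuxStmt14
open PowerSeries

noncomputable section

/-- `EE c = e^{cX}` as a formal power series over `ℚ`. -/
def EE (c : ℚ) : PowerSeries ℚ := rescale c (exp ℚ)

lemma coeff_EE (c : ℚ) (k : ℕ) : (coeff k) (EE c) = c ^ k / k.factorial := by
  simp [EE, coeff_rescale, coeff_exp, Algebra.algebraMap_self]
  ring

lemma EE_zero : EE 0 = 1 := by
  ext k
  simp [coeff_EE]
  rcases k with _ | k <;> simp [coeff_one]

lemma EE_add (c d : ℚ) : EE (c + d) = EE c * EE d := by
  rw [EE, EE, EE, exp_mul_exp_eq_exp_add]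

lemma EE_pow (c : ℚ) (k : ℕ) : EE c ^ k = EE (k * c) := by
  induction k with
  | zero => simp [EE_zero]
  | succ m ih =>
    rw [pow_succ, ih, ← EE_add]
    congr 1
    push_cast
    ring

/-- `BB c = (cX)/(e^{cX} - 1)` rescaled: `rescale (-c)` of the Bernoulli power series. -/
def BB (c : ℚ) : PowerSeries ℚ := rescale (-c) (bernoulliPowerSeries ℚ)

lemma coeff_BB (c : ℚ) (k : ℕ) :
    (coeff k) (BB c) = (-c) ^ k * (bernoulli k / k.factorial) := by
  simp [BB, coeff_rescale, bernoulliPowerSeries, Algebra.algebraMap_self]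

lemma key_bern (c : ℚ) : (1 - EE (-c)) * BB c = C c * X := by
  have h := bernoulliPowerSeries_mul_exp_sub_one ℚ
  have h2 := congrArg (rescale (-c)) h
  rw [map_mul, map_sub, map_one, rescale_X] at h2
  have : rescale (-c) (exp ℚ) = EE (-c) := rfl
  rw [this] at h2
  calc (1 - EE (-c)) * BB c = -(BB c * (EE (-c) - 1)) := by ring
    _ = -(C (-c) * X) := by rw [BB, h2]
    _ = C c * X := by rw [map_neg]; ring

lemma geom_EE (c : ℚ) (M : ℕ) :
    (∑ j ∈ range M, EE (-(c * j))) * (1 - EE (-c)) = 1 - EE (-(c * M)) := by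
  have hx : ∀ j : ℕ, EE (-c) ^ j = EE (-(c * j)) := by
    intro j
    rw [EE_pow]
    ring_nf
  have := geom_sum_mul (EE (-c)) M
  calc (∑ j ∈ range M, EE (-(c * j))) * (1 - EE (-c))
      = -((∑ j ∈ range M, EE (-c) ^ j) * (EE (-c) - 1)) := by
        simp_rw [hx]; ring
    _ = -(EE (-c) ^ M - 1) := by rw [this]
    _ = 1 - EE (-(c * M)) := by rw [hx]; ring

end
noncomputable section
open Polynomial in
lemma derivative_EE (c : ℚ) : d⁄dX ℚ (EE c) = PowerSeries.C c * EE c := by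
  ext n
  rw [PowerSeries.coeff_derivative, PowerSeries.coeff_C_mul, coeff_EE, coeff_EE,
    Nat.factorial_succ]
  have h1 : ((n+1 : ℕ) : ℚ) ≠ 0 := by positivity
  have h2 : ((n.factorial : ℕ) : ℚ) ≠ 0 := by positivity
  field_simp
  push_cast
  ring

lemma anchor (m : ℕ) : (PowerSeries.coeff (m+1)) (EE (-1) * BB 1 ^ (m+2)) = 0 := by
  set Q := BB 1 with hQdef
  have hk := key_bern 1
  rw [map_one, one_mul] at hk
  have hE1 : EE 1 * EE (-1) = 1 := by
    rw [← EE_add]; norm_num [EE_zero]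
  have hDU : d⁄dX ℚ (1 - EE (-1)) = EE (-1) := by
    rw [map_sub, Derivation.map_one_eq_zero, derivative_EE]
    have : PowerSeries.C (-1 : ℚ) = -1 := by rw [map_neg, map_one]
    rw [this]; ring
  have h1 : (1 - EE (-1)) * d⁄dX ℚ Q + Q * EE (-1) = 1 := by
    have h := congrArg (d⁄dX ℚ) hk
    rwa [Derivation.leibniz, hDU, PowerSeries.derivative_X, smul_eq_mul, smul_eq_mul] at h
  have h2 : PowerSeries.X * d⁄dX ℚ Q + EE (-1) * Q^2 = Q := by
    linear_combination Q * h1 - d⁄dX ℚ Q * hk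
  have h3 : PowerSeries.X * (d⁄dX ℚ Q * Q^m) + EE (-1) * Q^(m+2) = Q^(m+1) := by
    linear_combination Q^m * h2
  have h5 : PowerSeries.coeff m (d⁄dX ℚ (Q^(m+1))) =
      ((m+1 : ℕ) : ℚ) * PowerSeries.coeff m (Q^m * d⁄dX ℚ Q) := by
    rw [Derivation.leibniz_pow, Nat.add_sub_cancel, smul_eq_mul, map_nsmul, nsmul_eq_mul]
  have hco := PowerSeries.coeff_derivative (Q^(m+1)) m
  rw [h5] at hco
  have hne : ((m:ℚ)+1) ≠ 0 := by positivity
  push_cast at hco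
  have h4 : PowerSeries.coeff m (d⁄dX ℚ Q * Q^m) =
      PowerSeries.coeff (m+1) (Q^(m+1)) := by
    rw [mul_comm (d⁄dX ℚ Q)]
    apply mul_left_cancel₀ hne
    linear_combination hco
  have h6 := congrArg (PowerSeries.coeff (m+1)) h3
  rw [map_add, PowerSeries.coeff_succ_X_mul, h4] at h6
  linarith [h6]
end
noncomputable section
lemma norlund : ∀ (r : ℕ), 1 ≤ r → ∀ (z : ℚ),
    (PowerSeries.coeff (r-1)) (EE z * BB 1 ^ r) =
      (∏ i ∈ Finset.range (r-1), (z + 1 + i)) / (r-1).factorial := by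
  intro r hr
  induction r, hr using Nat.le_induction with
  | base =>
    intro z
    simp [PowerSeries.coeff_mul, coeff_EE, coeff_BB]
  | succ m hm ih =>
    obtain ⟨k, rfl⟩ : ∃ k, m = k + 1 := ⟨m - 1, by omega⟩
    intro z
    show (PowerSeries.coeff (k+1)) (EE z * BB 1 ^ (k+2)) =
      (∏ i ∈ Finset.range (k+1), (z + 1 + i)) / (k+1).factorial
    simp only [Nat.add_sub_cancel] at ih
    set Q := BB 1 with hQdef
    have hE1 : EE 1 * EE (-1) = 1 := by rw [← EE_add]; norm_num [EE_zero]
    have hk1 := key_bern 1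
    rw [map_one, one_mul] at hk1
    have hb : (EE 1 - 1) * Q = EE 1 * PowerSeries.X := by
      linear_combination EE 1 * hk1 + Q * hE1
    have hdiff : ∀ w : ℚ, PowerSeries.coeff (k+1) (EE (w+1) * Q^(k+2))
        - PowerSeries.coeff (k+1) (EE w * Q^(k+2))
        = (∏ i ∈ Finset.range k, (w + 2 + i)) / k.factorial := by
      intro w
      have h1 : EE (w+1) = EE w * EE 1 := by rw [← EE_add]
      have hser : EE (w+1) * Q^(k+2) - EE w * Q^(k+2)
          = PowerSeries.X * (EE (w+1) * Q^(k+1)) := by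
        calc EE (w+1) * Q^(k+2) - EE w * Q^(k+2)
            = (EE w * ((EE 1 - 1) * Q)) * Q^(k+1) := by rw [h1]; ring
          _ = PowerSeries.X * (EE (w+1) * Q^(k+1)) := by rw [hb, h1]; ring
      have hc := congrArg (PowerSeries.coeff (k+1)) hser
      rw [map_sub, PowerSeries.coeff_succ_X_mul, ih (w+1)] at hc
      rw [hc]
      congr 1
      exact Finset.prod_congr rfl fun i _ => by ring
    set F : Polynomial ℚ := ∑ w ∈ Finset.range (k+2),
      Polynomial.C ((PowerSeries.coeff (k+1-w)) (Q^(k+2)) / w.factorial) *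
        Polynomial.X ^ w with hFdef
    set G : Polynomial ℚ := Polynomial.C (1 / ((k+1).factorial : ℚ)) *
      ∏ i ∈ Finset.range (k+1), (Polynomial.X + Polynomial.C ((1:ℚ) + i)) with hGdef
    have hF : ∀ w : ℚ, F.eval w = PowerSeries.coeff (k+1) (EE w * Q^(k+2)) := by
      intro w
      rw [PowerSeries.coeff_mul, Finset.Nat.sum_antidiagonal_eq_sum_range_succ_mk, hFdef]
      simp only [Polynomial.eval_finset_sum, Polynomial.eval_mul, Polynomial.eval_C,
        Polynomial.eval_pow, Polynomial.eval_X]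
      apply Finset.sum_congr rfl
      intro j _
      rw [coeff_EE]
      ring
    have hG : ∀ w : ℚ, G.eval w =
        (∏ i ∈ Finset.range (k+1), (w + 1 + i)) / ((k+1).factorial : ℚ) := by
      intro w
      rw [hGdef]
      simp only [Polynomial.eval_mul, Polynomial.eval_C, Polynomial.eval_prod,
        Polynomial.eval_add, Polynomial.eval_X]
      have hp : ∏ i ∈ Finset.range (k+1), (w + (1 + (i:ℚ)))
          = ∏ i ∈ Finset.range (k+1), (w + 1 + i) :=
        Finset.prod_congr rfl fun i _ => by ring
      rw [hp]
      ring
    have hGdiff : ∀ w : ℚ, G.eval (w+1) - G.eval w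
        = (∏ i ∈ Finset.range k, (w + 2 + i)) / k.factorial := by
      intro w
      rw [hG, hG]
      have e1 : ∏ i ∈ Finset.range (k+1), (w + 1 + 1 + (i:ℚ))
          = (∏ i ∈ Finset.range k, (w + 2 + i)) * (w + 2 + k) := by
        rw [Finset.prod_range_succ]
        congr 1
        · exact Finset.prod_congr rfl fun i _ => by ring
        · ring
      have e2 : ∏ i ∈ Finset.range (k+1), (w + 1 + (i:ℚ))
          = (∏ i ∈ Finset.range k, (w + 2 + i)) * (w + 1) := by
        rw [Finset.prod_range_succ']
        congr 1
        · exact Finset.prod_congr rfl fun i _ => by push_cast; ring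
        · norm_num
      rw [e1, e2, Nat.factorial_succ]
      have h1 : ((k:ℚ)+1) ≠ 0 := by positivity
      have h2 : ((k.factorial : ℕ):ℚ) ≠ 0 := by positivity
      push_cast
      field_simp
      ring
    have hper : ∀ w : ℚ, (F - G).eval (w+1) = (F - G).eval w := by
      intro w
      simp only [Polynomial.eval_sub]
      have hd := hdiff w
      rw [← hF, ← hF] at hd
      have h2 := hGdiff w
      linarith
    have hroot0 : (F - G).eval (-1) = 0 := by
      simp only [Polynomial.eval_sub]
      rw [hF, hG]
      have ha : PowerSeries.coeff (k+1) (EE (-1) * Q^(k+2)) = 0 := anchor k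
      rw [ha]
      have hz : (∏ i ∈ Finset.range (k+1), ((-1:ℚ) + 1 + i)) = 0 := by
        apply Finset.prod_eq_zero (Finset.mem_range.2 (Nat.succ_pos k))
        norm_num
      rw [hz]
      norm_num
    have hallroots : ∀ j : ℕ, (F - G).eval ((-1:ℚ) + j) = 0 := by
      intro j
      induction j with
      | zero => simpa using hroot0
      | succ i hi =>
        have hstep := hper ((-1:ℚ) + (i:ℚ))
        have hc : ((-1:ℚ) + ((i+1 : ℕ):ℚ)) = ((-1:ℚ) + (i:ℚ)) + 1 := by push_cast; ring
        rw [hc, hstep]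
        exact hi
    have hFG : F = G := by
      have hz : F - G = 0 := by
        apply Polynomial.eq_zero_of_infinite_isRoot
        apply Set.infinite_of_injective_forall_mem (f := fun j : ℕ => (-1 + j : ℚ))
        · intro x y hxy
          simp only at hxy
          exact Nat.cast_injective (by linarith : (x:ℚ) = y)
        · intro j
          exact hallroots j
      exact sub_eq_zero.mp hz
    rw [← hF z, hFG, hG z]
noncomputable section
lemma antidiag_pi (r u : ℕ) (h : Fin r → ℕ → ℚ) :
    ∑ l ∈ Finset.finsuppAntidiag (Finset.univ : Finset (Fin r)) u, ∏ i, h i (l i)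
    = ∑ e ∈ (Fintype.piFinset fun _ : Fin r => Finset.range (u + 1)).filter
        (fun e => ∑ i, e i = u), ∏ i, h i (e i) := by
  have hcoe : ∀ e : Fin r → ℕ, ⇑(Finsupp.equivFunOnFinite.symm e) = e := fun e => rfl
  refine Finset.sum_nbij' (fun l => ⇑l) (fun e => Finsupp.equivFunOnFinite.symm e)
    ?_ ?_ ?_ ?_ ?_
  · intro l hl
    rw [Finset.mem_finsuppAntidiag] at hl
    rw [Finset.mem_filter]
    refine ⟨?_, by simpa using hl.1⟩
    rw [Fintype.mem_piFinset]
    intro i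
    rw [Finset.mem_range]
    show l i < u + 1
    have h1 : l i ≤ ∑ j, l j :=
      Finset.single_le_sum (fun j _ => Nat.zero_le _) (Finset.mem_univ i)
    have h2 : (∑ j, l j) = u := by simpa using hl.1
    omega
  · intro e he
    rw [Finset.mem_filter] at he
    rw [Finset.mem_finsuppAntidiag]
    refine ⟨?_, Finset.subset_univ _⟩
    rw [show (Finset.univ.sum ⇑(Finsupp.equivFunOnFinite.symm e)) = ∑ i, e i by rw [hcoe]]
    exact he.2
  · intro l _
    exact Finsupp.equivFunOnFinite_symm_coe l
  · intro e _
    rfl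
  · intro l _
    rfl
end
noncomputable section
lemma EE_sum {ι : Type*} (s : Finset ι) (f : ι → ℚ) :
    EE (∑ i ∈ s, f i) = ∏ i ∈ s, EE (f i) := by
  classical
  induction s using Finset.induction_on with
  | empty => simpa using EE_zero
  | insert _ _ h ih => rw [Finset.sum_insert h, Finset.prod_insert h, EE_add, ih]

/-- the two closed forms of the polynomial part of `p_a(n)` agree. -/
theorem stmt14 (r : ℕ) (hr : 1 ≤ r) (a : Fin r → ℕ) (ha : ∀ i, 0 < a i)
    (D : ℕ) (hD0 : 0 < D) (hD : ∀ i, a i ∣ D) (n : ℤ) :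
    (1 / ((D : ℚ) * (Nat.factorial (r - 1) : ℚ))) *
      (∑ t ∈ Fintype.piFinset fun i => Finset.range (D / a i),
        ∏ l ∈ Finset.Icc 1 (r - 1),
          (((n : ℚ) - ((∑ i, a i * t i : ℕ) : ℚ)) / (D : ℚ) + (l : ℚ)))
    = (1 / (∏ i, (a i : ℚ))) *
      ∑ u ∈ Finset.range r,
        ((-1 : ℚ) ^ u / (Nat.factorial (r - 1 - u) : ℚ)) *
        ∑ e ∈ (Fintype.piFinset fun _ : Fin r => Finset.range (u + 1)).filter
            (fun e => ∑ i, e i = u),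
          (∏ i, (bernoulli (e i) / (Nat.factorial (e i) : ℚ) * (a i : ℚ) ^ (e i))) *
          (n : ℚ) ^ (r - 1 - u) := by
  obtain ⟨d, rfl⟩ : ∃ d, r = d + 1 := ⟨r - 1, by omega⟩
  simp only [Nat.add_sub_cancel]
  -- basic nonvanishing
  have hDq0 : (D : ℚ) ≠ 0 := Nat.cast_ne_zero.mpr hD0.ne'
  have hPA0 : (∏ i, (a i : ℚ)) ≠ 0 :=
    Finset.prod_ne_zero_iff.mpr fun i _ => Nat.cast_ne_zero.mpr (ha i).ne'
  have hfac0 : ((d.factorial : ℕ) : ℚ) ≠ 0 := Nat.cast_ne_zero.mpr d.factorial_ne_zero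
  -- the grid, the shifted arguments, and the generating sum
  set T := Fintype.piFinset fun i : Fin (d+1) => Finset.range (D / a i) with hT
  set y : (Fin (d+1) → ℕ) → ℚ := fun t => (n : ℚ) - ((∑ i, a i * t i : ℕ) : ℚ) with hy
  set Gs : PowerSeries ℚ := ∑ t ∈ T, EE (y t) with hGsdef
  -- Step A: factor the generating sum
  have hGsplit : Gs = EE (n:ℚ) *
      ∏ i : Fin (d+1), (∑ j ∈ Finset.range (D / a i), EE (-((a i : ℚ) * (j:ℕ)))) := by
    rw [hGsdef, Finset.prod_univ_sum, Finset.mul_sum]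
    apply Finset.sum_congr rfl
    intro t _
    rw [← EE_sum, ← EE_add]
    congr 1
    rw [hy]
    push_cast
    rw [Finset.sum_neg_distrib]
    ring
  -- telescoping geometric sums
  have hgeo : ∀ i : Fin (d+1),
      (∑ j ∈ Finset.range (D / a i), EE (-((a i : ℚ) * (j:ℕ)))) * (1 - EE (-((a i:ℚ))))
      = 1 - EE (-(D:ℚ)) := by
    intro i
    have hMa : (a i : ℚ) * ((D / a i : ℕ) : ℚ) = (D:ℚ) := by
      rw [← Nat.cast_mul, Nat.mul_div_cancel' (hD i)]
    rw [geom_EE ((a i : ℚ)) (D / a i), hMa]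
  -- products of the Bernoulli normalizations
  have hbox : ∏ i : Fin (d+1), ((1 - EE (-((a i : ℚ)))) * BB ((a i:ℚ)))
      = PowerSeries.C (∏ i, (a i:ℚ)) * PowerSeries.X ^ (d+1) := by
    rw [Finset.prod_congr rfl fun i _ => key_bern ((a i:ℚ)), Finset.prod_mul_distrib,
      ← map_prod, Finset.prod_const, Finset.card_univ, Fintype.card_fin]
  have hG2 : Gs * ∏ i : Fin (d+1), (1 - EE (-((a i:ℚ))))
      = EE (n:ℚ) * (1 - EE (-(D:ℚ))) ^ (d+1) := by
    rw [hGsplit, mul_assoc, ← Finset.prod_mul_distrib,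
      Finset.prod_congr rfl fun i _ => hgeo i, Finset.prod_const, Finset.card_univ,
      Fintype.card_fin]
  -- Step B: the main power series identity
  have hmain : PowerSeries.C (∏ i, (a i:ℚ)) * PowerSeries.X ^ (d+1) *
        (Gs * BB (D:ℚ) ^ (d+1))
      = PowerSeries.C ((D:ℚ) ^ (d+1)) * PowerSeries.X ^ (d+1) *
        (EE (n:ℚ) * ∏ i, BB ((a i:ℚ))) := by
    calc PowerSeries.C (∏ i, (a i:ℚ)) * PowerSeries.X ^ (d+1) * (Gs * BB (D:ℚ) ^ (d+1))
        = (Gs * BB (D:ℚ) ^ (d+1)) *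
            ∏ i, ((1 - EE (-((a i : ℚ)))) * BB ((a i:ℚ))) := by rw [hbox]; ring
      _ = (Gs * ∏ i : Fin (d+1), (1 - EE (-((a i:ℚ))))) *
            (BB (D:ℚ) ^ (d+1) * ∏ i, BB ((a i:ℚ))) := by
          rw [Finset.prod_mul_distrib]; ring
      _ = (EE (n:ℚ) * (1 - EE (-(D:ℚ))) ^ (d+1)) *
            (BB (D:ℚ) ^ (d+1) * ∏ i, BB ((a i:ℚ))) := by rw [hG2]
      _ = EE (n:ℚ) * ((1 - EE (-(D:ℚ))) * BB (D:ℚ)) ^ (d+1) * ∏ i, BB ((a i:ℚ)) := by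
          rw [mul_pow]; ring
      _ = EE (n:ℚ) * (PowerSeries.C (D:ℚ) * PowerSeries.X) ^ (d+1) *
            ∏ i, BB ((a i:ℚ)) := by rw [key_bern ((D:ℚ))]
      _ = PowerSeries.C ((D:ℚ) ^ (d+1)) * PowerSeries.X ^ (d+1) *
            (EE (n:ℚ) * ∏ i, BB ((a i:ℚ))) := by rw [mul_pow, ← map_pow]; ring
  -- Step C: extract the coefficient
  have hcoeff : ∀ (c : ℚ) (f : PowerSeries ℚ),
      PowerSeries.coeff (d + (d+1)) (PowerSeries.C c * PowerSeries.X ^ (d+1) * f)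
        = c * PowerSeries.coeff d f := by
    intro c f
    rw [show PowerSeries.C c * PowerSeries.X ^ (d+1) * f
        = PowerSeries.X ^ (d+1) * (PowerSeries.C c * f) by ring]
    rw [PowerSeries.coeff_X_pow_mul, PowerSeries.coeff_C_mul]
  have hco := congrArg (PowerSeries.coeff (d + (d+1))) hmain
  rw [hcoeff, hcoeff] at hco
  -- Step D: evaluate the left coefficient via the Norlund identity
  have hre : ∀ w : ℚ, EE w * BB (D:ℚ) ^ (d+1)
      = PowerSeries.rescale (D:ℚ) (EE (w/(D:ℚ)) * BB 1 ^ (d+1)) := by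
    intro w
    rw [map_mul, map_pow]
    congr 1
    · rw [EE, EE, PowerSeries.rescale_rescale]
      congr 1
      field_simp
    · congr 1
      rw [BB, BB, PowerSeries.rescale_rescale]
      congr 1
      ring
  have hnor : ∀ z : ℚ, PowerSeries.coeff d (EE z * BB 1 ^ (d+1))
      = (∏ i ∈ Finset.range d, (z + 1 + i)) / d.factorial := by
    intro z
    have h := norlund (d+1) (by omega) z
    simpa using h
  have hPsum : PowerSeries.coeff d (Gs * BB (D:ℚ) ^ (d+1))
      = (D:ℚ)^d / d.factorial *
          ∑ t ∈ T, ∏ i ∈ Finset.range d, (y t / (D:ℚ) + 1 + i) := by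
    rw [hGsdef, Finset.sum_mul, map_sum, Finset.mul_sum]
    apply Finset.sum_congr rfl
    intro t _
    rw [hre (y t), PowerSeries.coeff_rescale, hnor (y t / (D:ℚ))]
    ring
  -- Step E: the right coefficient is the Bernoulli double sum
  have hK : PowerSeries.coeff d (EE (n:ℚ) * ∏ i, BB ((a i:ℚ)))
      = ∑ u ∈ Finset.range (d+1),
          ((-1 : ℚ) ^ u / (Nat.factorial (d - u) : ℚ)) *
          ∑ e ∈ (Fintype.piFinset fun _ : Fin (d+1) => Finset.range (u + 1)).filter
              (fun e => ∑ i, e i = u),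
            (∏ i, (bernoulli (e i) / (Nat.factorial (e i) : ℚ) * (a i : ℚ) ^ (e i))) *
            (n : ℚ) ^ (d - u) := by
    have hRHS := Finset.sum_range_reflect (fun u =>
      ((-1 : ℚ) ^ u / (Nat.factorial (d - u) : ℚ)) *
      ∑ e ∈ (Fintype.piFinset fun _ : Fin (d+1) => Finset.range (u + 1)).filter
          (fun e => ∑ i, e i = u),
        (∏ i, (bernoulli (e i) / (Nat.factorial (e i) : ℚ) * (a i : ℚ) ^ (e i))) *
        (n : ℚ) ^ (d - u)) (d+1)
    simp only [Nat.add_sub_cancel] at hRHS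
    rw [← hRHS, PowerSeries.coeff_mul, Finset.Nat.sum_antidiagonal_eq_sum_range_succ_mk]
    apply Finset.sum_congr rfl
    intro j hj
    rw [Finset.mem_range] at hj
    have e2 : d - (d - j) = j := by omega
    rw [e2]
    rw [coeff_EE]
    rw [PowerSeries.coeff_prod]
    rw [antidiag_pi (d+1) ((j, d-j).2) (fun i m => (PowerSeries.coeff m) (BB ((a i : ℚ))))]
    rw [Finset.mul_sum, Finset.mul_sum]
    apply Finset.sum_congr rfl
    intro e he
    rw [Finset.mem_filter] at he
    have hesum : ∑ i, e i = d - j := he.2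
    have hsign : ∏ i, PowerSeries.coeff (e i) (BB ((a i:ℚ)))
        = (-1:ℚ)^(d-j) *
            ∏ i, (bernoulli (e i) / (((e i).factorial : ℕ) : ℚ) * (a i:ℚ)^(e i)) := by
      rw [Finset.prod_congr rfl (fun i _ => coeff_BB ((a i:ℚ)) (e i))]
      have hfac : ∀ i : Fin (d+1),
          (-(a i:ℚ))^(e i) * (bernoulli (e i) / (((e i).factorial : ℕ):ℚ))
          = (-1:ℚ)^(e i) *
              (bernoulli (e i) / (((e i).factorial : ℕ):ℚ) * (a i:ℚ)^(e i)) := by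
        intro i
        rw [neg_pow]
        ring
      rw [Finset.prod_congr rfl (fun i _ => hfac i), Finset.prod_mul_distrib,
        Finset.prod_pow_eq_pow_sum, hesum]
    rw [hsign]
    ring
  -- final assembly
  rw [hPsum, hK] at hco
  have hIcc : ∀ t : Fin (d+1) → ℕ,
      (∏ l ∈ Finset.Icc 1 d, (((n:ℚ) - ((∑ i, a i * t i : ℕ):ℚ))/(D:ℚ) + (l:ℚ)))
      = ∏ i ∈ Finset.range d, (y t / (D:ℚ) + 1 + i) := by
    intro t
    rw [← Finset.Ico_add_one_right_eq_Icc, Finset.prod_Ico_eq_prod_range]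
    apply Finset.prod_congr rfl
    intro i _
    rw [hy]
    push_cast
    ring
  have hL : (∑ t ∈ T, ∏ l ∈ Finset.Icc 1 d,
        (((n:ℚ) - ((∑ i, a i * t i : ℕ):ℚ))/(D:ℚ) + (l:ℚ)))
      = ∑ t ∈ T, ∏ i ∈ Finset.range d, (y t / (D:ℚ) + 1 + i) :=
    Finset.sum_congr rfl (fun t _ => hIcc t)
  rw [hL]
  set SS := ∑ t ∈ T, ∏ i ∈ Finset.range d, (y t / (D:ℚ) + 1 + (i:ℚ)) with hSS
  set KK := ∑ u ∈ Finset.range (d+1),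
      ((-1 : ℚ) ^ u / (Nat.factorial (d - u) : ℚ)) *
      ∑ e ∈ (Fintype.piFinset fun _ : Fin (d+1) => Finset.range (u + 1)).filter
          (fun e => ∑ i, e i = u),
        (∏ i, (bernoulli (e i) / (Nat.factorial (e i) : ℚ) * (a i : ℚ) ^ (e i))) *
        (n : ℚ) ^ (d - u) with hKK
  have hco2 : (∏ i, (a i:ℚ)) * ((D:ℚ)^d * SS)
      = (D:ℚ)^(d+1) * KK * (d.factorial : ℚ) := by
    field_simp at hco
    linear_combination hco
  have hco3 : (D:ℚ)^d * ((∏ i, (a i:ℚ)) * SS)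
      = (D:ℚ)^d * ((D:ℚ) * KK * (d.factorial : ℚ)) := by
    linear_combination hco2
  have hco4 := mul_left_cancel₀ (pow_ne_zero d hDq0) hco3
  field_simp
  linear_combination hco4


end

end

end AuxStmt14
end
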